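/- Let f(x) = -x·log₂(x) - (1-x)·log₂(1-x) for 0 < x < 1, with f(0) = f(1) = 0. Then for all 0 ≤ x ≤ 1, f((1-x)/2) ≤ 1 - x²/(2·ln 2). -/

import Mathlib

open Real Set

/-- The binary entropy function `f(x) = -x·log₂ x - (1-x)·log₂(1-x)`.
(Since `Real.logb 2 0 = 0` by convention, this already satisfies `f(0) = f(1) = 0`.) -/
noncomputable def binEnt (x : ℝ) : ℝ :=
  -x * Real.logb 2 x - (1 - x) * Real.logb 2 (1 - x)

private lemma hasDerivAt_G {y : ℝ} (h1 : -1 < y) (h2 : y < 1) :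
    HasDerivAt (fun y => Real.log (1+y) - Real.log (1-y) - 2*y)
      (1/(1+y) + 1/(1-y) - 2) y := by
  have hA : HasDerivAt (fun y : ℝ => Real.log (1+y)) (1/(1+y)) y := by
    have := (Real.hasDerivAt_log (by linarith : (1:ℝ)+y ≠ 0)).comp y
      ((hasDerivAt_id y).const_add 1)
    simpa [one_div, Function.comp_def] using this
  have hB : HasDerivAt (fun y : ℝ => Real.log (1-y)) (-(1/(1-y))) y := by
    have := (Real.hasDerivAt_log (by linarith : (1:ℝ)-y ≠ 0)).comp y
      ((hasDerivAt_id y).neg.const_add 1)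
    simpa [one_div, Function.comp_def] using this
  have hC : HasDerivAt (fun y : ℝ => 2*y) 2 y := by
    simpa using (hasDerivAt_id y).const_mul 2
  have := (hA.sub hB).sub hC
  refine this.congr_deriv ?_
  ring

private lemma G_nonneg {x : ℝ} (hx0 : 0 ≤ x) (hx1 : x < 1) :
    0 ≤ Real.log (1+x) - Real.log (1-x) - 2*x := by
  set G : ℝ → ℝ := fun y => Real.log (1+y) - Real.log (1-y) - 2*y with hG
  have hmem : ∀ y ∈ Icc (0:ℝ) x, -1 < y ∧ y < 1 := fun y hy =>
    ⟨by linarith [hy.1], by linarith [hy.2]⟩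
  have hmono : MonotoneOn G (Icc 0 x) := by
    apply monotoneOn_of_deriv_nonneg (convex_Icc 0 x)
    · intro y hy
      exact (hasDerivAt_G (hmem y hy).1 (hmem y hy).2).continuousAt.continuousWithinAt
    · intro y hy
      have hy' := hmem y (interior_subset hy)
      exact (hasDerivAt_G hy'.1 hy'.2).differentiableAt.differentiableWithinAt
    · intro y hy
      have hy' := hmem y (interior_subset hy)
      have h1 : (0:ℝ) < 1 + y := by linarith [hy'.1]
      have h2 : (0:ℝ) < 1 - y := by linarith [hy'.2]
      rw [(hasDerivAt_G hy'.1 hy'.2).deriv]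
      have : 1/(1+y) + 1/(1-y) - 2 = (2*y^2)/((1+y)*(1-y)) := by
        field_simp; ring
      rw [this]; positivity
  have h0 : G 0 = 0 := by simp [hG]
  have := hmono (left_mem_Icc.2 hx0) (right_mem_Icc.2 hx0) hx0
  rw [h0] at this
  exact this

private lemma F_nonneg {x : ℝ} (hx0 : 0 ≤ x) (hx1 : x < 1) :
    x^2 ≤ (1+x) * Real.log (1+x) + (1-x) * Real.log (1-x) := by
  set F : ℝ → ℝ := fun y => (1+y) * Real.log (1+y) + (1-y) * Real.log (1-y) - y^2 with hF
  have hmem : ∀ y ∈ Icc (0:ℝ) x, -1 < y ∧ y < 1 := fun y hy =>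
    ⟨by linarith [hy.1], by linarith [hy.2]⟩
  have hder : ∀ y : ℝ, -1 < y → y < 1 →
      HasDerivAt F (Real.log (1+y) - Real.log (1-y) - 2*y) y := by
    intro y h1 h2
    have h1' : (0:ℝ) < 1 + y := by linarith
    have h2' : (0:ℝ) < 1 - y := by linarith
    have hA : HasDerivAt (fun y : ℝ => Real.log (1+y)) (1/(1+y)) y := by
      have := (Real.hasDerivAt_log h1'.ne').comp y ((hasDerivAt_id y).const_add 1)
      simpa [one_div, Function.comp_def] using this
    have hB : HasDerivAt (fun y : ℝ => Real.log (1-y)) (-(1/(1-y))) y := by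
      have := (Real.hasDerivAt_log h2'.ne').comp y ((hasDerivAt_id y).neg.const_add 1)
      simpa [one_div, Function.comp_def] using this
    have hA' : HasDerivAt (fun y : ℝ => (1+y) * Real.log (1+y))
        (1 * Real.log (1+y) + (1+y) * (1/(1+y))) y :=
      (((hasDerivAt_id y).const_add 1)).mul hA
    have hB' : HasDerivAt (fun y : ℝ => (1-y) * Real.log (1-y))
        ((-1) * Real.log (1-y) + (1-y) * (-(1/(1-y)))) y := by
      have := (((hasDerivAt_id y).neg.const_add 1)).mul hB
      simpa [Pi.mul_def, ← sub_eq_add_neg] using this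
    have hsq : HasDerivAt (fun y : ℝ => y^2) (2*y) y := by
      simpa using hasDerivAt_pow 2 y
    have := (hA'.add hB').sub hsq
    refine this.congr_deriv ?_
    field_simp
    ring
  have hmono : MonotoneOn F (Icc 0 x) := by
    apply monotoneOn_of_deriv_nonneg (convex_Icc 0 x)
    · intro y hy
      exact (hder y (hmem y hy).1 (hmem y hy).2).continuousAt.continuousWithinAt
    · intro y hy
      have hy' := hmem y (interior_subset hy)
      exact (hder y hy'.1 hy'.2).differentiableAt.differentiableWithinAt
    · intro y hy
      have hy' := hmem y (interior_subset hy)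
      rw [(hder y hy'.1 hy'.2).deriv]
      exact G_nonneg (interior_subset hy).1 hy'.2
  have h0 : F 0 = 0 := by simp [hF]
  have := hmono (left_mem_Icc.2 hx0) (right_mem_Icc.2 hx0) hx0
  rw [h0] at this
  simpa [hF, sub_nonneg] using this

/-- For all `0 ≤ x ≤ 1`, `f((1-x)/2) ≤ 1 - x²/(2·ln 2)`. -/
theorem stmt16 (x : ℝ) (hx0 : 0 ≤ x) (hx1 : x ≤ 1) :
    binEnt ((1 - x) / 2) ≤ 1 - x ^ 2 / (2 * Real.log 2) := by
  have hl2 : 0 < Real.log 2 := Real.log_pos one_lt_two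
  rcases hx1.eq_or_lt with heq | hlt
  · subst heq
    have hlog : (0.6931471803:ℝ) < Real.log 2 := Real.log_two_gt_d9
    simp [binEnt]
    rw [show ((Real.log 2)⁻¹ * 2⁻¹ : ℝ) = 1/(2*Real.log 2) by ring,
      div_le_one (by linarith)]
    linarith
  · have h1 : (0:ℝ) < 1 - x := by linarith
    have h2 : (0:ℝ) < 1 + x := by linarith
    have key : binEnt ((1-x)/2)
        = 1 - ((1+x)*Real.log (1+x)+(1-x)*Real.log (1-x))/(2*Real.log 2) := by
      unfold binEnt
      rw [show (1:ℝ) - (1-x)/2 = (1+x)/2 by ring]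
      rw [Real.logb, Real.logb, Real.log_div h1.ne' two_ne_zero,
        Real.log_div h2.ne' two_ne_zero]
      field_simp
      ring
    rw [key]
    have hS := F_nonneg hx0 hlt
    gcongr
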